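/- Commuting property of projections: for any φ ∈ H¹(Ω) and any element T of the partition, ∇_w(Q_h φ) = 𝕼_h(∇φ) on T, where Q_h φ = {Q_0 φ, Q_b φ} with Q_0 the L² projection onto P_k(T), Q_b the L² projection onto P_k(e) on each face e ⊂ ∂T, 𝕼_h the L² projection onto [P_{k-1}(T)]^d, and ∇_w the discrete weak gradient of order k-1. -/

import Mathlib

local notation "⟪" x ", " y "⟫" => @inner ℝ _ _ x y

/-- Commuting property of projections: for `φ ∈ H¹(Ω)` and an element
`T` of the partition, `∇_w (Q_h φ) = 𝕼_h (∇φ)` on `T`.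

Here, on the element `T`: `L2` models `L²(T)`, `Bd` models `L²(∂T)`, `L2d` models
`[L²(T)]^d`; `Pk ⊆ L2` is `P_k(T)`, `PkB ⊆ Bd` is the space of piecewise `P_k`
polynomials on the faces of `∂T`, and `G ⊆ L2d` is the gradient space
`[P_{k-1}(T)]^d`.  `dvg` and `ntr` are the divergence `q ↦ ∇·q` and normal trace
`q ↦ q·n`; on `G` these land in `P_k(T)` and the piecewise-`P_k` boundary space
(`hdvg`, `hntr`).  `Q_0, Q_b, 𝕼_h` are the orthogonal (`L²`) projections onto
`Pk`, `PkB`, `G`.  `φ0 = φ|_T`, `φb = φ|_{∂T}`, `gradφ = ∇φ`, and `hibp` is the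
integration-by-parts identity for `φ ∈ H¹(T)`.  If `w ∈ G` is the discrete weak
gradient of `Q_h φ = {Q_0 φ, Q_b φ}` (characterized by `hw`), then
`w = 𝕼_h (∇φ)`. -/
theorem weak_gradient_commutes_with_projection
    {L2 L2d Bd : Type*}
    [NormedAddCommGroup L2] [InnerProductSpace ℝ L2]
    [NormedAddCommGroup L2d] [InnerProductSpace ℝ L2d]
    [NormedAddCommGroup Bd] [InnerProductSpace ℝ Bd]
    (Pk : Submodule ℝ L2) (PkB : Submodule ℝ Bd) (G : Submodule ℝ L2d)
    [Submodule.HasOrthogonalProjection Pk] [Submodule.HasOrthogonalProjection PkB]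
    [Submodule.HasOrthogonalProjection G]
    (dvg : L2d →ₗ[ℝ] L2) (ntr : L2d →ₗ[ℝ] Bd)
    (hdvg : ∀ q ∈ G, dvg q ∈ Pk) (hntr : ∀ q ∈ G, ntr q ∈ PkB)
    (φ0 : L2) (φb : Bd) (gradφ : L2d)
    (hibp : ∀ q ∈ G, ⟪gradφ, q⟫ = -⟪φ0, dvg q⟫ + ⟪φb, ntr q⟫)
    (w : L2d) (hwG : w ∈ G)
    (hw : ∀ q ∈ G, ⟪w, q⟫ =
      -⟪(Pk.orthogonalProjectionOnto φ0 : L2), dvg q⟫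
        + ⟪(PkB.orthogonalProjectionOnto φb : Bd), ntr q⟫) :
    w = (G.orthogonalProjectionOnto gradφ : L2d) := by

  have key : ∀ q ∈ G, ⟪w - (G.orthogonalProjectionOnto gradφ : L2d), q⟫ = (0:ℝ) := by
    intro q hq
    have h1 : ⟪(Pk.orthogonalProjectionOnto φ0 : L2), dvg q⟫ = ⟪φ0, dvg q⟫ := by
      have := Pk.starProjection_inner_eq_zero φ0 (dvg q) (hdvg q hq)
      rw [inner_sub_left, Submodule.starProjection_apply] at this; linarith
    have h2 : ⟪(PkB.orthogonalProjectionOnto φb : Bd), ntr q⟫ = ⟪φb, ntr q⟫ := by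
      have := PkB.starProjection_inner_eq_zero φb (ntr q) (hntr q hq)
      rw [inner_sub_left, Submodule.starProjection_apply] at this; linarith
    have h3 : ⟪(G.orthogonalProjectionOnto gradφ : L2d), q⟫ = ⟪gradφ, q⟫ := by
      have := G.starProjection_inner_eq_zero gradφ q hq
      rw [inner_sub_left, Submodule.starProjection_apply] at this; linarith
    rw [inner_sub_left, hw q hq, h1, h2, h3, hibp q hq]; ring
  have hmem : w - (G.orthogonalProjectionOnto gradφ : L2d) ∈ G :=
    G.sub_mem hwG (G.orthogonalProjectionOnto gradφ).2
  have := key _ hmem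
  rw [inner_self_eq_zero] at this
  exact sub_eq_zero.mp this
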